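/- Let P : ℝ^p → ℝ be convex, nonnegative, and positively homogeneous of degree one, i.e., P(c • v) = c * P(v) for all c ≥ 0 and all v ∈ ℝ^p. Let λ ≥ 0 and a ∈ ℝ^p. If v̂ = 0 is a global minimizer over ℝ^p of g(v) = (1/2)‖a − v‖₂² + λ P(v), then v* = 0 is a global maximizer of f(v) = ⟨a, v⟩ − λ P(v) over the closed unit ball {v : ‖v‖₂ ≤ 1}; equivalently, ⟨a, v⟩ − λ P(v) ≤ 0 for all v with ‖v‖₂ ≤ 1. -/

import Mathlib

open RealInnerProductSpace

/-- degenerate (zero-solution) case of the v-coordinate update in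
Proposition 1 of 'Regularized Partial Least Squares'. If `v̂ = 0` globally
minimizes `(1/2)‖a − v‖² + λ P(v)`, then `v* = 0` globally maximizes
`⟨a, v⟩ − λ P(v)` over the closed unit ball, i.e. `⟨a, v⟩ − λ P(v) ≤ 0` for all
`v` with `‖v‖ ≤ 1`. -/
theorem rpls_v_update_zero {p : ℕ} (P : EuclideanSpace ℝ (Fin p) → ℝ)
    (hconv : ConvexOn ℝ Set.univ P) (hnonneg : ∀ v, 0 ≤ P v)
    (hhom : ∀ c : ℝ, 0 ≤ c → ∀ v, P (c • v) = c * P v)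
    (lam : ℝ) (hlam : 0 ≤ lam) (a : EuclideanSpace ℝ (Fin p))
    (hmin : ∀ v : EuclideanSpace ℝ (Fin p),
      (1 / 2) * ‖a - (0 : EuclideanSpace ℝ (Fin p))‖ ^ 2 + lam * P 0 ≤
        (1 / 2) * ‖a - v‖ ^ 2 + lam * P v) :
    ∀ v : EuclideanSpace ℝ (Fin p), ‖v‖ ≤ 1 → ⟪a, v⟫ - lam * P v ≤ 0 := by
  intro v hv
  have hP0 : P 0 = 0 := by
    have := hhom 0 le_rfl 0
    simpa using this
  -- key inequality: for all t > 0, ⟪a,v⟫ - lam * P v ≤ t * ‖v‖^2 / 2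
  have key : ∀ t : ℝ, 0 < t → ⟪a, v⟫ - lam * P v ≤ t * ‖v‖ ^ 2 / 2 := by
    intro t ht
    have h := hmin (t • v)
    rw [hP0, hhom t ht.le v] at h
    have hexp : ‖a - t • v‖ ^ 2 = ‖a‖ ^ 2 - 2 * (t * ⟪a, v⟫) + t ^ 2 * ‖v‖ ^ 2 := by
      rw [norm_sub_sq_real, real_inner_smul_right, norm_smul]
      simp [mul_pow, abs_of_pos ht]
    rw [hexp] at h
    simp only [sub_zero] at h
    -- h : (1/2)*‖a‖^2 + lam*0 ≤ (1/2)*(...) + lam*(t * P v)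
    have h2 : t * (⟪a, v⟫ - lam * P v) ≤ t * (t * ‖v‖ ^ 2 / 2) := by nlinarith
    have := (mul_le_mul_iff_right₀ ht).mp h2
    linarith
  by_contra hc
  push_neg at hc
  set ε := ⟪a, v⟫ - lam * P v with hε
  have hε0 : 0 < ε := hc
  have h1 : ε ≤ ε * ‖v‖ ^ 2 / 2 := key ε hε0
  have hv2 : ‖v‖ ^ 2 ≤ 1 := by nlinarith [norm_nonneg v]
  nlinarith
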